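/- An atomic amalgam of Kleene lattices is a sharply paraorthomodular poset if and only if it contains no atomic loop of order 3. -/
import Mathlib


/-- A pasted family of finite Kleene lattices over a common carrier `K`,
indexed by `ι`.  Each block `blk i` carries a bounded distributive lattice
structure `(le i, inf i, sup i, bot, top)` with an antitone involution `compl`
which is paraorthomodular and regular (i.e. each block is a Kleene lattice)
and has at least 6 elements.  Any two distinct blocks intersect either in
`{bot, top}` or in a common atomic Kleene subalgebra of at most 4 elements on
which the operations coincide and whose elements other than `bot`, `top` are
simultaneously atoms or simultaneously coatoms of both blocks. -/
structure PastedFamily (K : Type*) (ι : Type*) where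
  blk : ι → Set K
  cover : ∀ x : K, ∃ i, x ∈ blk i
  le : ι → K → K → Prop
  inf : ι → K → K → K
  sup : ι → K → K → K
  compl : K → K
  bot : K
  top : K
  bot_mem : ∀ i, bot ∈ blk i
  top_mem : ∀ i, top ∈ blk i
  finite : ∀ i, (blk i).Finite
  card6 : ∀ i, 6 ≤ (blk i).ncard
  le_refl : ∀ i x, x ∈ blk i → le i x x
  le_antisymm' : ∀ i x y, le i x y → le i y x → x = y
  le_trans' : ∀ i x y z, le i x y → le i y z → le i x z
  bot_le : ∀ i x, x ∈ blk i → le i bot x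
  le_top : ∀ i x, x ∈ blk i → le i x top
  inf_mem : ∀ i x y, x ∈ blk i → y ∈ blk i → inf i x y ∈ blk i
  sup_mem : ∀ i x y, x ∈ blk i → y ∈ blk i → sup i x y ∈ blk i
  inf_le_left : ∀ i x y, x ∈ blk i → y ∈ blk i → le i (inf i x y) x
  inf_le_right : ∀ i x y, x ∈ blk i → y ∈ blk i → le i (inf i x y) y
  le_inf : ∀ i x y z, x ∈ blk i → y ∈ blk i → z ∈ blk i →
    le i z x → le i z y → le i z (inf i x y)
  le_sup_left : ∀ i x y, x ∈ blk i → y ∈ blk i → le i x (sup i x y)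
  le_sup_right : ∀ i x y, x ∈ blk i → y ∈ blk i → le i y (sup i x y)
  sup_le : ∀ i x y z, x ∈ blk i → y ∈ blk i → z ∈ blk i →
    le i x z → le i y z → le i (sup i x y) z
  distrib : ∀ i x y z, x ∈ blk i → y ∈ blk i → z ∈ blk i →
    inf i x (sup i y z) = sup i (inf i x y) (inf i x z)
  compl_mem : ∀ i x, x ∈ blk i → compl x ∈ blk i
  compl_antitone : ∀ i x y, x ∈ blk i → y ∈ blk i → le i x y →
    le i (compl y) (compl x)
  compl_invol : ∀ x, compl (compl x) = x
  /-- Each block is paraorthomodular. -/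
  blockParaOM : ∀ i x y, x ∈ blk i → y ∈ blk i → le i x y →
    inf i (compl x) y = bot → x = y
  /-- Each block is regular (Kleene condition). -/
  regular : ∀ i x y, x ∈ blk i → y ∈ blk i →
    le i (inf i x (compl x)) (sup i y (compl y))
  /-- The block orders agree on intersections of blocks. -/
  le_compat : ∀ i j x y, x ∈ blk i → y ∈ blk i → x ∈ blk j → y ∈ blk j →
    le i x y → le j x y
  /-- Pasting condition on the intersection of two distinct blocks. -/
  inter : ∀ i j, i ≠ j → blk i ∩ blk j = {bot, top} ∨
    ((blk i ∩ blk j).ncard ≤ 4 ∧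
     bot ∈ blk i ∩ blk j ∧ top ∈ blk i ∩ blk j ∧
     (∀ x ∈ blk i ∩ blk j, compl x ∈ blk i ∩ blk j) ∧
     (∀ x y, x ∈ blk i ∩ blk j → y ∈ blk i ∩ blk j →
       inf i x y = inf j x y ∧ inf i x y ∈ blk i ∩ blk j ∧
       sup i x y = sup j x y ∧ sup i x y ∈ blk i ∩ blk j) ∧
     (∀ x ∈ blk i ∩ blk j, x ≠ bot → x ≠ top →
       ((x ≠ bot ∧ ∀ z ∈ blk i, le i z x → z = bot ∨ z = x) ∧
        (x ≠ bot ∧ ∀ z ∈ blk j, le j z x → z = bot ∨ z = x)) ∨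
       ((x ≠ top ∧ ∀ z ∈ blk i, le i x z → z = top ∨ z = x) ∧
        (x ≠ top ∧ ∀ z ∈ blk j, le j x z → z = top ∨ z = x))))

namespace PastedFamily

variable {K ι : Type*} (A : PastedFamily K ι)

/-- The order of the atomic amalgam: `x ≤ y` iff `x ≤ y` in some block. -/
def gle (x y : K) : Prop := ∃ i, x ∈ A.blk i ∧ y ∈ A.blk i ∧ A.le i x y

/-- `s` is the least upper bound of `x` and `y` in the amalgam. -/
def IsLubA (x y s : K) : Prop :=
  A.gle x s ∧ A.gle y s ∧ ∀ z, A.gle x z → A.gle y z → A.gle s z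

/-- `m` is the greatest lower bound of `x` and `y` in the amalgam. -/
def IsGlbA (x y m : K) : Prop :=
  A.gle m x ∧ A.gle m y ∧ ∀ z, A.gle z x → A.gle z y → A.gle z m

/-- Paraorthomodularity of the amalgam: `x ≤ y` and `x' ∧ y = 0`
(i.e. the lower cone `L(x', y)` is `{0}`) imply `x = y`. -/
def ParaOM : Prop := ∀ x y, A.gle x y →
  (∀ z, A.gle z (A.compl x) → A.gle z y → z = A.bot) → x = y

/-- Blocks `i, j, k` form an atomic loop of order 3: consecutive (cyclic)
intersections have exactly 4 elements and the triple intersection is `{0,1}`. -/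
def AtomicLoop3 (i j k : ι) : Prop :=
  (A.blk i ∩ A.blk j).ncard = 4 ∧ (A.blk j ∩ A.blk k).ncard = 4 ∧
  (A.blk k ∩ A.blk i).ncard = 4 ∧
  A.blk i ∩ A.blk j ∩ A.blk k = {A.bot, A.top}

/-- Blocks `i, j, k, l` form an atomic loop of order 4. -/
def AtomicLoop4 (i j k l : ι) : Prop :=
  (A.blk i ∩ A.blk j).ncard = 4 ∧ (A.blk j ∩ A.blk k).ncard = 4 ∧
  (A.blk k ∩ A.blk l).ncard = 4 ∧ (A.blk l ∩ A.blk i).ncard = 4 ∧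
  A.blk i ∩ A.blk k = {A.bot, A.top} ∧ A.blk j ∩ A.blk l = {A.bot, A.top} ∧
  A.blk i ∩ A.blk j ∩ A.blk k = {A.bot, A.top} ∧
  A.blk i ∩ A.blk j ∩ A.blk l = {A.bot, A.top} ∧
  A.blk i ∩ A.blk k ∩ A.blk l = {A.bot, A.top} ∧
  A.blk j ∩ A.blk k ∩ A.blk l = {A.bot, A.top}

end PastedFamily

namespace PastedFamily

variable {K ι : Type*} (A : PastedFamily K ι)

/-! ### Basic facts -/

lemma bot_ne_top' : A.bot ≠ A.top := by
  intro h
  obtain ⟨i, _⟩ := A.cover A.bot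
  have hsub : A.blk i ⊆ {A.bot} := by
    intro x hx
    have hxb : A.bot = x :=
      A.le_antisymm' i A.bot x (A.bot_le i x hx) (by rw [h]; exact A.le_top i x hx)
    simp [← hxb]
  have hle := Set.ncard_le_ncard hsub (Set.finite_singleton _)
  have h6 := A.card6 i
  rw [Set.ncard_singleton] at hle
  omega

lemma compl_top_eq : A.compl A.top = A.bot := by
  obtain ⟨i, _⟩ := A.cover A.bot
  have hm : A.compl A.bot ∈ A.blk i := A.compl_mem i _ (A.bot_mem i)
  have h1 : A.le i (A.compl A.top) A.bot := by
    have := A.compl_antitone i (A.compl A.bot) A.top hm (A.top_mem i) (A.le_top i _ hm)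
    rwa [A.compl_invol] at this
  exact A.le_antisymm' i _ _ h1 (A.bot_le i _ (A.compl_mem i _ (A.top_mem i)))

lemma compl_bot_eq : A.compl A.bot = A.top := by
  rw [← A.compl_top_eq]; exact A.compl_invol _

lemma compl_inj {x y : K} (h : A.compl x = A.compl y) : x = y := by
  rw [← A.compl_invol x, h, A.compl_invol]

lemma compl_eq_bot {x : K} (h : A.compl x = A.bot) : x = A.top := by
  rw [← A.compl_invol x, h, A.compl_bot_eq]

lemma compl_eq_top {x : K} (h : A.compl x = A.top) : x = A.bot := by
  rw [← A.compl_invol x, h, A.compl_top_eq]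

lemma le_compl_swap {i : ι} {x y : K} (hx : x ∈ A.blk i) (hy : y ∈ A.blk i)
    (h : A.le i x (A.compl y)) : A.le i y (A.compl x) := by
  have := A.compl_antitone i x (A.compl y) hx (A.compl_mem i y hy) h
  rwa [A.compl_invol] at this

/-! ### Global order facts -/

lemma gle_antisymm {x y : K} (h1 : A.gle x y) (h2 : A.gle y x) : x = y := by
  obtain ⟨i, hxi, hyi, hle1⟩ := h1
  obtain ⟨j, hyj, hxj, hle2⟩ := h2
  exact A.le_antisymm' i x y hle1 (A.le_compat j i y x hyj hxj hyi hxi hle2)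

lemma eq_bot_of_gle_bot {x : K} (h : A.gle x A.bot) : x = A.bot := by
  obtain ⟨i, hx, _, hle⟩ := h
  exact A.le_antisymm' i x A.bot hle (A.bot_le i x hx)

/-! ### Block lattice facts -/

lemma inf_eq_left {i : ι} {x y : K} (h : A.le i x y) (hx : x ∈ A.blk i) (hy : y ∈ A.blk i) :
    A.inf i x y = x :=
  A.le_antisymm' i _ _ (A.inf_le_left i x y hx hy)
    (A.le_inf i x y x hx hy hx (A.le_refl i x hx) h)

lemma sup_eq_right {i : ι} {x y : K} (h : A.le i x y) (hx : x ∈ A.blk i) (hy : y ∈ A.blk i) :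
    A.sup i x y = y :=
  A.le_antisymm' i _ _ (A.sup_le i x y y hx hy hy h (A.le_refl i y hy))
    (A.le_sup_right i x y hx hy)

lemma sup_bot_left {i : ι} {y : K} (hy : y ∈ A.blk i) : A.sup i A.bot y = y :=
  A.sup_eq_right (A.bot_le i y hy) (A.bot_mem i) hy

lemma sup_bot_right {i : ι} {x : K} (hx : x ∈ A.blk i) : A.sup i x A.bot = x :=
  A.le_antisymm' i _ _
    (A.sup_le i x A.bot x hx (A.bot_mem i) hx (A.le_refl i x hx) (A.bot_le i x hx))
    (A.le_sup_left i x A.bot hx (A.bot_mem i))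

lemma inf_comm' {i : ι} {x y : K} (hx : x ∈ A.blk i) (hy : y ∈ A.blk i) :
    A.inf i x y = A.inf i y x :=
  A.le_antisymm' i _ _
    (A.le_inf i y x _ hy hx (A.inf_mem i x y hx hy)
      (A.inf_le_right i x y hx hy) (A.inf_le_left i x y hx hy))
    (A.le_inf i x y _ hx hy (A.inf_mem i y x hy hx)
      (A.inf_le_right i y x hy hx) (A.inf_le_left i y x hy hx))

/-! ### Cardinality helpers -/

lemma blk_not_subset {i : ι} {S : Set K} (hS : S.Finite) (hcard : S.ncard < 6) :
    ¬ A.blk i ⊆ S := by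
  intro h
  have := Set.ncard_le_ncard h hS
  have h6 := A.card6 i
  omega

/-! ### Atoms and coatoms of blocks -/

/-- `a` is an atom of block `i`. -/
def IsAtomB (i : ι) (a : K) : Prop :=
  a ≠ A.bot ∧ ∀ z ∈ A.blk i, A.le i z a → z = A.bot ∨ z = a

/-- `a` is a coatom of block `i`. -/
def IsCoatomB (i : ι) (a : K) : Prop :=
  a ≠ A.top ∧ ∀ z ∈ A.blk i, A.le i a z → z = A.top ∨ z = a

lemma atom_ne_top {i : ι} {a : K} (ha : A.IsAtomB i a) : a ≠ A.top := by
  intro h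
  refine A.blk_not_subset (i := i) (S := {A.bot, A.top})
    ((Set.finite_singleton _).insert _) ?_ ?_
  · have : ({A.bot, A.top} : Set K).ncard ≤ 2 := by
      refine le_trans (Set.ncard_insert_le _ _) ?_
      rw [Set.ncard_singleton]
    omega
  · intro z hz
    rcases ha.2 z hz (by rw [h]; exact A.le_top i z hz) with h0 | h1
    · exact Or.inl h0
    · exact Or.inr (h1.trans h)

lemma coatom_ne_bot {i : ι} {a : K} (ha : A.IsCoatomB i a) : a ≠ A.bot := by
  intro h
  refine A.blk_not_subset (i := i) (S := {A.bot, A.top})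
    ((Set.finite_singleton _).insert _) ?_ ?_
  · have : ({A.bot, A.top} : Set K).ncard ≤ 2 := by
      refine le_trans (Set.ncard_insert_le _ _) ?_
      rw [Set.ncard_singleton]
    omega
  · intro z hz
    rcases ha.2 z hz (by rw [h]; exact A.bot_le i z hz) with h0 | h1
    · exact Or.inr h0
    · exact Or.inl (h1.trans h)

lemma isCoatomB_compl {i : ι} {a : K} (ha : A.IsAtomB i a) (hai : a ∈ A.blk i) :
    A.IsCoatomB i (A.compl a) := by
  constructor
  · intro h; exact ha.1 (A.compl_eq_top h)
  · intro z hz hle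
    have h2 : A.le i (A.compl z) a := by
      have := A.compl_antitone i (A.compl a) z (A.compl_mem i a hai) hz hle
      rwa [A.compl_invol] at this
    rcases ha.2 (A.compl z) (A.compl_mem i z hz) h2 with h0 | h1
    · exact Or.inl (A.compl_eq_bot h0)
    · right; rw [← A.compl_invol z, h1]

lemma isAtomB_compl {i : ι} {a : K} (ha : A.IsCoatomB i a) (hai : a ∈ A.blk i) :
    A.IsAtomB i (A.compl a) := by
  constructor
  · intro h; exact ha.1 (A.compl_eq_bot h)
  · intro z hz hle
    have h2 : A.le i a (A.compl z) := A.le_compl_swap hz hai hle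
    rcases ha.2 (A.compl z) (A.compl_mem i z hz) h2 with h0 | h1
    · exact Or.inl (A.compl_eq_top h0)
    · right; rw [← A.compl_invol z, h1]

lemma fixed_atom_false {i : ι} {a : K} (ha : A.IsAtomB i a) (hai : a ∈ A.blk i)
    (hfix : A.compl a = a) : False := by
  have key : ∀ y ∈ A.blk i, y ≠ A.bot → A.le i a y := by
    intro y hy hyne
    have hmem := A.inf_mem i a y hai hy
    rcases ha.2 (A.inf i a y) hmem (A.inf_le_left i a y hai hy) with h0 | h1
    · exfalso
      have hreg := A.regular i a y hai hy
      rw [hfix, A.inf_eq_left (A.le_refl i a hai) hai hai] at hreg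
      have hsy := A.sup_mem i y (A.compl y) hy (A.compl_mem i y hy)
      have h3 : A.inf i a (A.sup i y (A.compl y)) = a := A.inf_eq_left hreg hai hsy
      rw [A.distrib i a y (A.compl y) hai hy (A.compl_mem i y hy), h0,
        A.sup_bot_left (A.inf_mem i a (A.compl y) hai (A.compl_mem i y hy))] at h3
      -- h3 : inf a (compl y) = a, so a ≤ compl y, so y ≤ compl a = a
      have h4 : A.le i a (A.compl y) := by
        rw [← h3]; exact A.inf_le_right i a (A.compl y) hai (A.compl_mem i y hy)
      have h5 : A.le i y a := by
        have := A.le_compl_swap hai hy h4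
        rwa [hfix] at this
      rcases ha.2 y hy h5 with h6 | h6
      · exact hyne h6
      · rw [h6, A.inf_eq_left (A.le_refl i a hai) hai hai] at h0
        exact ha.1 h0
    · rw [← h1]; exact A.inf_le_right i a y hai hy
  refine A.blk_not_subset (i := i) (S := {A.bot, a, A.top})
    (((Set.finite_singleton _).insert _).insert _) ?_ ?_
  · have : ({A.bot, a, A.top} : Set K).ncard ≤ 3 := by
      refine le_trans (Set.ncard_insert_le _ _) ?_
      have := Set.ncard_insert_le a ({A.top} : Set K)
      rw [Set.ncard_singleton] at this
      omega
    omega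
  · intro y hy
    by_cases hyt : y = A.top
    · simp [hyt]
    by_cases hyb : y = A.bot
    · simp [hyb]
    have hc0 : A.compl y ≠ A.bot := fun h => hyt (A.compl_eq_bot h)
    have h4 := key (A.compl y) (A.compl_mem i y hy) hc0
    have h5 : A.le i y a := by
      have := A.le_compl_swap hai hy h4
      rwa [hfix] at this
    rcases ha.2 y hy h5 with h6 | h6
    · exact absurd h6 hyb
    · simp [h6]

lemma atom_coatom_false {i : ι} {x : K} (ha : A.IsAtomB i x) (hc : A.IsCoatomB i x)
    (hx : x ∈ A.blk i) : False := by
  have hcompl : ∀ y ∈ A.blk i, y ≠ A.bot → y ≠ A.top → y ≠ x →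
      A.inf i x y = A.bot ∧ A.sup i x y = A.top := by
    intro y hy h0 h1 hx'
    constructor
    · rcases ha.2 (A.inf i x y) (A.inf_mem i x y hx hy) (A.inf_le_left i x y hx hy) with h | h
      · exact h
      · exfalso
        have hxy : A.le i x y := by rw [← h]; exact A.inf_le_right i x y hx hy
        rcases hc.2 y hy hxy with h' | h'
        · exact h1 h'
        · exact hx' h'
    · rcases hc.2 (A.sup i x y) (A.sup_mem i x y hx hy) (A.le_sup_left i x y hx hy) with h | h
      · exact h
      · exfalso
        have hyx : A.le i y x := by rw [← h]; exact A.le_sup_right i x y hx hy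
        rcases ha.2 y hy hyx with h' | h'
        · exact h0 h'
        · exact hx' h'
  obtain ⟨y1, hy1, hy1n⟩ : ∃ y ∈ A.blk i, y ∉ ({A.bot, A.top, x} : Set K) := by
    by_contra hcon; push_neg at hcon
    refine A.blk_not_subset (i := i) (S := {A.bot, A.top, x})
      (((Set.finite_singleton _).insert _).insert _) ?_ hcon
    have h1 := Set.ncard_insert_le A.bot ({A.top, x} : Set K)
    have h2 := Set.ncard_insert_le A.top ({x} : Set K)
    rw [Set.ncard_singleton] at h2
    omega
  obtain ⟨y2, hy2, hy2n⟩ : ∃ y ∈ A.blk i, y ∉ ({A.bot, A.top, x, y1} : Set K) := by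
    by_contra hcon; push_neg at hcon
    refine A.blk_not_subset (i := i) (S := {A.bot, A.top, x, y1})
      ((((Set.finite_singleton _).insert _).insert _).insert _) ?_ hcon
    have h1 := Set.ncard_insert_le A.bot ({A.top, x, y1} : Set K)
    have h2 := Set.ncard_insert_le A.top ({x, y1} : Set K)
    have h3 := Set.ncard_insert_le x ({y1} : Set K)
    rw [Set.ncard_singleton] at h3
    omega
  simp only [Set.mem_insert_iff, Set.mem_singleton_iff, not_or] at hy1n hy2n
  obtain ⟨hy1b, hy1t, hy1x⟩ := hy1n
  obtain ⟨hy2b, hy2t, hy2x, hy21⟩ := hy2n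
  obtain ⟨hi1, hs1⟩ := hcompl y1 hy1 hy1b hy1t hy1x
  obtain ⟨hi2, hs2⟩ := hcompl y2 hy2 hy2b hy2t hy2x
  -- y1 = y2 since complements are unique in a distributive lattice
  have key : ∀ u v : K, u ∈ A.blk i → v ∈ A.blk i →
      A.inf i x u = A.bot → A.sup i x v = A.top → A.le i u v := by
    intro u v hu hv hiu hsv
    have h1 : A.inf i u (A.sup i x v) = u :=
      A.inf_eq_left (by rw [hsv]; exact A.le_top i u hu) hu
        (A.sup_mem i x v hx hv)
    rw [A.distrib i u x v hu hx hv] at h1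
    have h2 : A.inf i u x = A.bot := by rw [A.inf_comm' hu hx]; exact hiu
    rw [h2, A.sup_bot_left (A.inf_mem i u v hu hv)] at h1
    rw [← h1]; exact A.inf_le_right i u v hu hv
  have h12 := key y1 y2 hy1 hy2 hi1 hs2
  have h21 := key y2 y1 hy2 hy1 hi2 hs1
  exact hy21 (A.le_antisymm' i y2 y1 h21 h12)

/-! ### Orthogonality of distinct atoms in a block (uses Kleene + paraOM) -/

lemma distinct_atoms_orth {i : ι} {a b : K} (ha : A.IsAtomB i a) (hb : A.IsAtomB i b)
    (hai : a ∈ A.blk i) (hbi : b ∈ A.blk i) (hne : a ≠ b) : A.le i a (A.compl b) := by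
  have hb' := A.compl_mem i b hbi
  have hab : A.inf i a b = A.bot := by
    rcases ha.2 (A.inf i a b) (A.inf_mem i a b hai hbi) (A.inf_le_left i a b hai hbi) with h | h
    · exact h
    · exfalso
      have hle : A.le i a b := by rw [← h]; exact A.inf_le_right i a b hai hbi
      rcases hb.2 a hai hle with h' | h'
      · exact ha.1 h'
      · exact hne h'
  rcases ha.2 (A.inf i a (A.compl b)) (A.inf_mem i a _ hai hb')
      (A.inf_le_left i a _ hai hb') with h0 | h1
  swap
  · rw [← h1]; exact A.inf_le_right i a _ hai hb'
  exfalso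
  have htm := A.sup_mem i a b hai hbi
  have hc : A.inf i (A.compl b) (A.sup i a b) = A.inf i b (A.compl b) := by
    rw [A.distrib i (A.compl b) a b hb' hai hbi, A.inf_comm' hb' hai, h0,
      A.sup_bot_left (A.inf_mem i (A.compl b) b hb' hbi), A.inf_comm' hb' hbi]
  rcases hb.2 (A.inf i b (A.compl b)) (A.inf_mem i b _ hbi hb')
      (A.inf_le_left i b _ hbi hb') with hbb | hbb
  · -- inf b b' = bot : paraorthomodularity forces b = a ∨ b
    have heq := A.blockParaOM i b (A.sup i a b) hbi htm
      (A.le_sup_right i a b hai hbi) (by rw [hc, hbb])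
    have hle : A.le i a b := by rw [heq]; exact A.le_sup_left i a b hai hbi
    rcases hb.2 a hai hle with h' | h'
    · exact ha.1 h'
    · exact hne h'
  · -- inf b b' = b : Kleene condition gives b ≤ compl a, so a ≤ compl b
    have ha' := A.compl_mem i a hai
    have hreg := A.regular i b a hbi hai
    rw [hbb] at hreg
    have hsm := A.sup_mem i a (A.compl a) hai ha'
    have h3 : A.inf i b (A.sup i a (A.compl a)) = b := A.inf_eq_left hreg hbi hsm
    rw [A.distrib i b a (A.compl a) hbi hai ha'] at h3
    have hba : A.inf i b a = A.bot := by rw [A.inf_comm' hbi hai]; exact hab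
    rw [hba, A.sup_bot_left (A.inf_mem i b _ hbi ha')] at h3
    have h4 : A.le i b (A.compl a) := by rw [← h3]; exact A.inf_le_right i b _ hbi ha'
    have h5 : A.le i a (A.compl b) := A.le_compl_swap hbi hai h4
    have h6 : A.inf i a (A.compl b) = a := A.inf_eq_left h5 hai hb'
    exact ha.1 (by rw [← h6, h0])

lemma sup_atoms_ne_top {j : ι} {p q : K} (hp : A.IsAtomB j p) (hq : A.IsAtomB j q)
    (hpj : p ∈ A.blk j) (hqj : q ∈ A.blk j) : A.sup j p q ≠ A.top := by
  intro htop
  refine A.blk_not_subset (i := j) (S := {A.bot, p, q, A.top})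
    ((((Set.finite_singleton _).insert _).insert _).insert _) ?_ ?_
  · have h1 := Set.ncard_insert_le A.bot ({p, q, A.top} : Set K)
    have h2 := Set.ncard_insert_le p ({q, A.top} : Set K)
    have h3 := Set.ncard_insert_le q ({A.top} : Set K)
    rw [Set.ncard_singleton] at h3
    omega
  · intro y hy
    have h1 : A.inf j y A.top = y :=
      A.inf_eq_left (A.le_top j y hy) hy (A.top_mem j)
    rw [← htop, A.distrib j y p q hy hpj hqj] at h1
    have hyp : A.inf j y p = A.bot ∨ A.inf j y p = p := by
      rcases hp.2 (A.inf j y p) (A.inf_mem j y p hy hpj) (A.inf_le_right j y p hy hpj) with h | h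
      · exact Or.inl h
      · exact Or.inr h
    have hyq : A.inf j y q = A.bot ∨ A.inf j y q = q := by
      rcases hq.2 (A.inf j y q) (A.inf_mem j y q hy hqj) (A.inf_le_right j y q hy hqj) with h | h
      · exact Or.inl h
      · exact Or.inr h
    rcases hyp with h2 | h2 <;> rcases hyq with h3 | h3 <;> rw [h2, h3] at h1
    · rw [A.sup_bot_left (A.bot_mem j)] at h1; simp [← h1]
    · rw [A.sup_bot_left hqj] at h1; simp [← h1]
    · rw [A.sup_bot_right hpj] at h1; simp [← h1]
    · rw [htop] at h1; simp [← h1]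

/-! ### The pasting condition -/

lemma inter_alt2 {i j : ι} (hij : i ≠ j) {a : K} (hai : a ∈ A.blk i) (haj : a ∈ A.blk j)
    (h0 : a ≠ A.bot) (h1 : a ≠ A.top) :
    (A.blk i ∩ A.blk j).ncard ≤ 4 ∧
     A.bot ∈ A.blk i ∩ A.blk j ∧ A.top ∈ A.blk i ∩ A.blk j ∧
     (∀ x ∈ A.blk i ∩ A.blk j, A.compl x ∈ A.blk i ∩ A.blk j) ∧
     (∀ x y, x ∈ A.blk i ∩ A.blk j → y ∈ A.blk i ∩ A.blk j →
       A.inf i x y = A.inf j x y ∧ A.inf i x y ∈ A.blk i ∩ A.blk j ∧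
       A.sup i x y = A.sup j x y ∧ A.sup i x y ∈ A.blk i ∩ A.blk j) ∧
     (∀ x ∈ A.blk i ∩ A.blk j, x ≠ A.bot → x ≠ A.top →
       ((x ≠ A.bot ∧ ∀ z ∈ A.blk i, A.le i z x → z = A.bot ∨ z = x) ∧
        (x ≠ A.bot ∧ ∀ z ∈ A.blk j, A.le j z x → z = A.bot ∨ z = x)) ∨
       ((x ≠ A.top ∧ ∀ z ∈ A.blk i, A.le i x z → z = A.top ∨ z = x) ∧
        (x ≠ A.top ∧ ∀ z ∈ A.blk j, A.le j x z → z = A.top ∨ z = x))) := by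
  rcases A.inter i j hij with h | h
  · exfalso
    have : a ∈ ({A.bot, A.top} : Set K) := h ▸ ⟨hai, haj⟩
    rcases this with h' | h'
    · exact h0 h'
    · exact h1 h'
  · exact h

lemma atom_or_coatom {i j : ι} (hij : i ≠ j) {x : K} (hxi : x ∈ A.blk i) (hxj : x ∈ A.blk j)
    (h0 : x ≠ A.bot) (h1 : x ≠ A.top) :
    (A.IsAtomB i x ∧ A.IsAtomB j x) ∨ (A.IsCoatomB i x ∧ A.IsCoatomB j x) := by
  obtain ⟨_, _, _, _, _, hato⟩ := A.inter_alt2 hij hxi hxj h0 h1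
  rcases hato x ⟨hxi, hxj⟩ h0 h1 with ⟨⟨_, h2⟩, ⟨_, h3⟩⟩ | ⟨⟨_, h2⟩, ⟨_, h3⟩⟩
  · exact Or.inl ⟨⟨h0, h2⟩, ⟨h0, h3⟩⟩
  · exact Or.inr ⟨⟨h1, h2⟩, ⟨h1, h3⟩⟩

lemma exists_shared_atom {i j : ι} (hij : i ≠ j) {a : K} (hai : a ∈ A.blk i)
    (haj : a ∈ A.blk j) (h0 : a ≠ A.bot) (h1 : a ≠ A.top) :
    ∃ p, p ∈ A.blk i ∧ p ∈ A.blk j ∧ A.IsAtomB i p ∧ A.IsAtomB j p := by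
  rcases A.atom_or_coatom hij hai haj h0 h1 with ⟨h2, h3⟩ | ⟨h2, h3⟩
  · exact ⟨a, hai, haj, h2, h3⟩
  · exact ⟨A.compl a, A.compl_mem i a hai, A.compl_mem j a haj,
      A.isAtomB_compl h2 hai, A.isAtomB_compl h3 haj⟩

/-! ### Paraorthomodularity of the amalgam (unconditional) -/

lemma paraOM_always : A.ParaOM := by
  rintro x y ⟨i, hx, hy, hxy⟩ hcone
  have hcx := A.compl_mem i x hx
  have hc : A.inf i (A.compl x) y = A.bot := by
    refine hcone _ ?_ ?_
    · exact ⟨i, A.inf_mem i _ _ hcx hy, hcx, A.inf_le_left i _ _ hcx hy⟩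
    · exact ⟨i, A.inf_mem i _ _ hcx hy, hy, A.inf_le_right i _ _ hcx hy⟩
  exact A.blockParaOM i x y hx hy hxy hc

/-! ### ncard helpers -/

lemma ncard_four {a b c d : K} (h1 : a ≠ b) (h2 : a ≠ c) (h3 : a ≠ d) (h4 : b ≠ c)
    (h5 : b ≠ d) (h6 : c ≠ d) : ({a, b, c, d} : Set K).ncard = 4 := by
  rw [Set.ncard_insert_of_notMem (by simp [h1, h2, h3])
      (((Set.finite_singleton _).insert _).insert _),
    Set.ncard_insert_of_notMem (by simp [h4, h5]) ((Set.finite_singleton _).insert _),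
    Set.ncard_pair h6]

lemma ncard_six {a b c d e f : K} (h1 : a ≠ b) (h2 : a ≠ c) (h3 : a ≠ d) (h4 : a ≠ e)
    (h5 : a ≠ f) (h6 : b ≠ c) (h7 : b ≠ d) (h8 : b ≠ e) (h9 : b ≠ f) (h10 : c ≠ d)
    (h11 : c ≠ e) (h12 : c ≠ f) (h13 : d ≠ e) (h14 : d ≠ f) (h15 : e ≠ f) :
    ({a, b, c, d, e, f} : Set K).ncard = 6 := by
  rw [Set.ncard_insert_of_notMem (by simp [h1, h2, h3, h4, h5])
      (((((Set.finite_singleton _).insert _).insert _).insert _).insert _),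
    Set.ncard_insert_of_notMem (by simp [h6, h7, h8, h9])
      ((((Set.finite_singleton _).insert _).insert _).insert _),
    Set.ncard_insert_of_notMem (by simp [h10, h11, h12])
      (((Set.finite_singleton _).insert _).insert _),
    Set.ncard_insert_of_notMem (by simp [h13, h14]) ((Set.finite_singleton _).insert _),
    Set.ncard_pair h15]

/-! ### Orthogonality fails in the presence of an atomic loop of order 3 -/

lemma noloop_of_ortho
    (hOrth : ∀ x y : K, A.gle x (A.compl y) → ∃ s, A.IsLubA x y s) :
    ¬ ∃ i j k : ι, A.AtomicLoop3 i j k := by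
  rintro ⟨i, j, k, hij, hjk, hki, htr⟩
  have hne : ∀ a b : ι, (A.blk a ∩ A.blk b).ncard = 4 → a ≠ b := by
    intro a b hcard hab
    subst hab
    rw [Set.inter_self] at hcard
    have := A.card6 a
    omega
  have hij' := hne i j hij
  have hjk' := hne j k hjk
  have hki' := hne k i hki
  have hmid : ∀ a b : ι, (A.blk a ∩ A.blk b).ncard = 4 →
      ∃ x, x ∈ A.blk a ∧ x ∈ A.blk b ∧ x ≠ A.bot ∧ x ≠ A.top := by
    intro a b hcard
    by_contra hcon
    push_neg at hcon
    have hsub : A.blk a ∩ A.blk b ⊆ {A.bot, A.top} := by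
      rintro x ⟨hxa, hxb⟩
      by_cases h0 : x = A.bot
      · exact Or.inl h0
      · exact Or.inr (hcon x hxa hxb h0)
    have hle := Set.ncard_le_ncard hsub ((Set.finite_singleton _).insert _)
    have h2 := Set.ncard_insert_le A.bot ({A.top} : Set K)
    rw [Set.ncard_singleton] at h2
    omega
  obtain ⟨a, hai, haj, ha0, ha1⟩ := hmid i j hij
  obtain ⟨p, hpi, hpj, hpAi, hpAj⟩ := A.exists_shared_atom hij' hai haj ha0 ha1
  obtain ⟨b, hbj, hbk, hb0, hb1⟩ := hmid j k hjk
  obtain ⟨q, hqj, hqk, hqAj, hqAk⟩ := A.exists_shared_atom hjk' hbj hbk hb0 hb1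
  obtain ⟨c, hck, hci, hc0, hc1⟩ := hmid k i hki
  obtain ⟨r, hrk, hri, hrAk, hrAi⟩ := A.exists_shared_atom hki' hck hci hc0 hc1
  have hp0 : p ≠ A.bot := hpAj.1
  have hp1 : p ≠ A.top := A.atom_ne_top hpAj
  have hq0 : q ≠ A.bot := hqAj.1
  have hr0 : r ≠ A.bot := hrAk.1
  have htrmem : ∀ w : K, w ∈ A.blk i → w ∈ A.blk j → w ∈ A.blk k →
      w = A.bot ∨ w = A.top := by
    intro w h1 h2 h3
    have : w ∈ A.blk i ∩ A.blk j ∩ A.blk k := ⟨⟨h1, h2⟩, h3⟩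
    rw [htr] at this
    exact this
  have hpk : p ∉ A.blk k := by
    intro h
    rcases htrmem p hpi hpj h with h' | h'
    · exact hp0 h'
    · exact hp1 h'
  have hqi : q ∉ A.blk i := by
    intro h
    rcases htrmem q h hqj hqk with h' | h'
    · exact hq0 h'
    · exact A.atom_ne_top hqAj h'
  have hrj : r ∉ A.blk j := by
    intro h
    rcases htrmem r hri h hrk with h' | h'
    · exact hr0 h'
    · exact A.atom_ne_top hrAk h'
  have hpq : p ≠ q := fun h => hqi (h ▸ hpi)
  have hpr : p ≠ r := fun h => hpk (h ▸ hrk)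
  have hqr : q ≠ r := fun h => hrj (h ▸ hqj)
  obtain ⟨s, hps, hqs, hlub⟩ := hOrth p q
    ⟨j, hpj, A.compl_mem j q hqj, A.distinct_atoms_orth hpAj hqAj hpj hqj hpq⟩
  set t := A.sup j p q with htdef
  have htj : t ∈ A.blk j := A.sup_mem j p q hpj hqj
  have hpt : A.le j p t := A.le_sup_left j p q hpj hqj
  have hqt : A.le j q t := A.le_sup_right j p q hpj hqj
  have ht1 : t ≠ A.top := A.sup_atoms_ne_top hpAj hqAj hpj hqj
  have ht0 : t ≠ A.bot := by
    intro h
    exact hp0 (A.le_antisymm' j p A.bot (h ▸ hpt) (A.bot_le j p hpj))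
  have htp : t ≠ p := by
    intro h
    rcases hpAj.2 q hqj (h ▸ hqt) with h' | h'
    · exact hq0 h'
    · exact hpq h'.symm
  have hrk' := A.compl_mem k r hrk
  have hri' := A.compl_mem i r hri
  have hr'1 : A.compl r ≠ A.top := fun h => hr0 (A.compl_eq_top h)
  have hr'j : A.compl r ∉ A.blk j := by
    intro h
    exact hrj (by rw [← A.compl_invol r]; exact A.compl_mem j _ h)
  have hsr : A.gle s (A.compl r) := hlub (A.compl r)
    ⟨i, hpi, hri', A.distinct_atoms_orth hpAi hrAi hpi hri hpr⟩
    ⟨k, hqk, hrk', A.distinct_atoms_orth hqAk hrAk hqk hrk hqr⟩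
  have hst : A.gle s t := hlub t ⟨j, hpj, htj, hpt⟩ ⟨j, hqj, htj, hqt⟩
  obtain ⟨u, hpu, hsu, hpus⟩ := hps
  obtain ⟨u', hqu', hsu', hqus⟩ := hqs
  have hs0 : s ≠ A.bot := by
    intro h
    exact hp0 (A.eq_bot_of_gle_bot ⟨u, hpu, h ▸ hsu, h ▸ hpus⟩)
  have hs1 : s ≠ A.top := by
    intro h
    obtain ⟨w, hsw, hrw, hlw⟩ := hsr
    exact hr'1 (A.le_antisymm' w _ _ (A.le_top w _ hrw) (h ▸ hlw))
  by_cases hsj : s ∈ A.blk j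
  · -- then s = t, and t ≤ r' yields a contradiction
    have hts : A.le j t s := A.sup_le j p q s hpj hqj hsj
      (A.le_compat u j p s hpu hsu hpj hsj hpus)
      (A.le_compat u' j q s hqu' hsu' hqj hsj hqus)
    have hseq : s = t := A.gle_antisymm hst ⟨j, htj, hsj, hts⟩
    obtain ⟨w, hsw, hrw, hlw⟩ := hsr
    rw [hseq] at hsw hlw
    have hwj : w ≠ j := fun h => hr'j (h ▸ hrw)
    have htcw : A.IsCoatomB w t := by
      rcases A.atom_or_coatom (fun h : j = w => hwj h.symm) htj hsw ht0 ht1 with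
        ⟨hA, _⟩ | ⟨_, hC⟩
      · exfalso
        rcases hA.2 p hpj hpt with h' | h'
        · exact hp0 h'
        · exact htp h'.symm
      · exact hC
    rcases htcw.2 (A.compl r) hrw hlw with h' | h'
    · exact hr'1 h'
    · have hti : t ∈ A.blk i := h' ▸ hri'
      have htk : t ∈ A.blk k := h' ▸ hrk'
      rcases htrmem t hti htj htk with h4 | h4
      · exact ht0 h4
      · exact ht1 h4
  · -- s ∉ blk j
    have huj : u ≠ j := fun h => hsj (h ▸ hsu)
    have hu'j : u' ≠ j := fun h => hsj (h ▸ hsu')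
    have hpAu : A.IsAtomB u p := by
      rcases A.atom_or_coatom (fun h : j = u => huj h.symm) hpj hpu hp0 hp1 with
        ⟨_, hA⟩ | ⟨hC, _⟩
      · exact hA
      · exact (A.atom_coatom_false hpAj hC hpj).elim
    have hqAu' : A.IsAtomB u' q := by
      rcases A.atom_or_coatom (fun h : j = u' => hu'j h.symm) hqj hqu' hq0
          (A.atom_ne_top hqAj) with ⟨_, hA⟩ | ⟨hC, _⟩
      · exact hA
      · exact (A.atom_coatom_false hqAj hC hqj).elim
    by_cases huu' : u = u'
    · -- impossible: blk j ∩ blk u would contain six elements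
      subst huu'
      obtain ⟨hcard4, _, _, hcclose, _, _⟩ :=
        A.inter_alt2 (fun h : j = u => huj h.symm) hpj hpu hp0 hp1
      have hp' := hcclose p ⟨hpj, hpu⟩
      have hq' := hcclose q ⟨hqj, hqu'⟩
      have hsub : ({A.bot, A.top, p, q, A.compl p, A.compl q} : Set K) ⊆
          A.blk j ∩ A.blk u := by
        intro w hw
        simp only [Set.mem_insert_iff, Set.mem_singleton_iff] at hw
        rcases hw with h | h | h | h | h | h <;> subst h
        · exact ⟨A.bot_mem j, A.bot_mem u⟩
        · exact ⟨A.top_mem j, A.top_mem u⟩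
        · exact ⟨hpj, hpu⟩
        · exact ⟨hqj, hqu'⟩
        · exact hp'
        · exact hq'
      have h6 : ({A.bot, A.top, p, q, A.compl p, A.compl q} : Set K).ncard = 6 := by
        refine ncard_six A.bot_ne_top' (Ne.symm hp0) (Ne.symm hq0)
          (fun h => hp1 (A.compl_eq_bot h.symm)) (fun h => A.atom_ne_top hqAj (A.compl_eq_bot h.symm))
          (Ne.symm hp1) (Ne.symm (A.atom_ne_top hqAj))
          (fun h => hp0 (A.compl_eq_top h.symm)) (fun h => hq0 (A.compl_eq_top h.symm))
          hpq (fun h => A.fixed_atom_false hpAj hpj h.symm)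
          (fun h => A.atom_coatom_false hpAj (by rw [h]; exact A.isCoatomB_compl hqAj hqj) hpj)
          (fun h => A.atom_coatom_false hqAj (by rw [h]; exact A.isCoatomB_compl hpAj hpj) hqj)
          (fun h => A.fixed_atom_false hqAj hqj h.symm)
          (fun h => hpq (A.compl_inj h))
      have hle := Set.ncard_le_ncard hsub ((A.finite j).inter_of_left _)
      rw [h6] at hle
      omega
    · -- s is a coatom of every block containing it; contradiction with s ≤ t
      have hscoU : A.IsCoatomB u s := by
        rcases A.atom_or_coatom huu' hsu hsu' hs0 hs1 with ⟨hA, _⟩ | ⟨hC, _⟩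
        · exfalso
          rcases hA.2 p hpu hpus with h' | h'
          · exact hp0 h'
          · exact hsj (h' ▸ hpj)
        · exact hC
      obtain ⟨v, hsv, htv, hlv⟩ := hst
      have hscoV : A.IsCoatomB v s := by
        by_cases hvu : v = u
        · rw [hvu]; exact hscoU
        · rcases A.atom_or_coatom (fun h : u = v => hvu h.symm) hsu hsv hs0 hs1 with
            ⟨hA, _⟩ | ⟨_, hC⟩
          · exfalso
            rcases hA.2 p hpu hpus with h' | h'
            · exact hp0 h'
            · exact hsj (h' ▸ hpj)
          · exact hC
      rcases hscoV.2 t htv hlv with h' | h'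
      · exact ht1 h'
      · exact hsj (h' ▸ htj)

/-! ### Orthogonality holds in the absence of atomic loops of order 3 -/

lemma ortho_of_noloop (hnl : ¬ ∃ i j k : ι, A.AtomicLoop3 i j k) :
    ∀ x y : K, A.gle x (A.compl y) → ∃ s, A.IsLubA x y s := by
  rintro x y ⟨i, hxi, hy'i, hxy'⟩
  have hyi : y ∈ A.blk i := by
    rw [← A.compl_invol y]; exact A.compl_mem i _ hy'i
  have hsi : A.sup i x y ∈ A.blk i := A.sup_mem i x y hxi hyi
  refine ⟨A.sup i x y, ⟨i, hxi, hsi, A.le_sup_left i x y hxi hyi⟩,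
    ⟨i, hyi, hsi, A.le_sup_right i x y hxi hyi⟩, ?_⟩
  rintro z ⟨m, hxm, hzm, hxz⟩ ⟨n, hyn, hzn, hyz⟩
  by_cases hzi : z ∈ A.blk i
  · exact ⟨i, hsi, hzi, A.sup_le i x y z hxi hyi hzi
      (A.le_compat m i x z hxm hzm hxi hzi hxz) (A.le_compat n i y z hyn hzn hyi hzi hyz)⟩
  have hmi : m ≠ i := fun h => hzi (h ▸ hzm)
  have hni : n ≠ i := fun h => hzi (h ▸ hzn)
  have hz0 : z ≠ A.bot := fun h => hzi (h ▸ A.bot_mem i)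
  have hz1 : z ≠ A.top := fun h => hzi (h ▸ A.top_mem i)
  by_cases hx0 : x = A.bot
  · refine ⟨n, ?_, hzn, ?_⟩
    · rw [hx0, A.sup_bot_left hyi]; exact hyn
    · rw [hx0, A.sup_bot_left hyi]; exact hyz
  by_cases hy0 : y = A.bot
  · refine ⟨m, ?_, hzm, ?_⟩
    · rw [hy0, A.sup_bot_right hxi]; exact hxm
    · rw [hy0, A.sup_bot_right hxi]; exact hxz
  have hx1 : x ≠ A.top := by
    intro h
    have hyt : A.compl y = A.top :=
      A.le_antisymm' i _ _ (A.le_top i _ hy'i) (h ▸ hxy')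
    exact hy0 (A.compl_eq_top hyt)
  have hy1 : y ≠ A.top := by
    intro h
    have hcb : A.compl y = A.bot := by rw [h, A.compl_top_eq]
    rw [hcb] at hxy'
    exact hx0 (A.le_antisymm' i x A.bot hxy' (A.bot_le i x hxi))
  have hxA : A.IsAtomB i x ∧ A.IsAtomB m x := by
    rcases A.atom_or_coatom (fun h : i = m => hmi h.symm) hxi hxm hx0 hx1 with hA | ⟨_, hC⟩
    · exact hA
    · exfalso
      rcases hC.2 z hzm hxz with h' | h'
      · exact hz1 h'
      · exact hzi (h' ▸ hxi)
  have hyA : A.IsAtomB i y ∧ A.IsAtomB n y := by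
    rcases A.atom_or_coatom (fun h : i = n => hni h.symm) hyi hyn hy0 hy1 with hA | ⟨_, hC⟩
    · exact hA
    · exfalso
      rcases hC.2 z hzn hyz with h' | h'
      · exact hz1 h'
      · exact hzi (h' ▸ hyi)
  by_cases hmn : m = n
  · subst hmn
    obtain ⟨_, _, _, _, hops, _⟩ :=
      A.inter_alt2 (fun h : i = m => hmi h.symm) hxi hxm hx0 hx1
    obtain ⟨_, _, hsup_eq, _⟩ := hops x y ⟨hxi, hxm⟩ ⟨hyi, hyn⟩
    refine ⟨m, ?_, hzm, ?_⟩
    · rw [hsup_eq]; exact A.sup_mem m x y hxm hyn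
    · rw [hsup_eq]; exact A.sup_le m x y z hxm hyn hzm hxz hyz
  · have hzC : A.IsCoatomB m z ∧ A.IsCoatomB n z := by
      rcases A.atom_or_coatom hmn hzm hzn hz0 hz1 with ⟨hA, _⟩ | hC
      · exfalso
        rcases hA.2 x hxm hxz with h' | h'
        · exact hx0 h'
        · exact hzi (h' ▸ hxi)
      · exact hC
    exfalso
    have hx' : x ≠ A.compl x := fun h => A.fixed_atom_false hxA.1 hxi h.symm
    have hy' : y ≠ A.compl y := fun h => A.fixed_atom_false hyA.1 hyi h.symm
    have hzAm : A.IsAtomB m (A.compl z) := A.isAtomB_compl hzC.1 hzm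
    have hz' : z ≠ A.compl z := by
      intro h
      exact A.fixed_atom_false hzAm (A.compl_mem m z hzm) (by rw [A.compl_invol]; exact h)
    obtain ⟨hmc4, _, _, hmcl, _, _⟩ :=
      A.inter_alt2 (fun h : i = m => hmi h.symm) hxi hxm hx0 hx1
    obtain ⟨hnc4, _, _, hncl, _, _⟩ :=
      A.inter_alt2 (fun h : i = n => hni h.symm) hyi hyn hy0 hy1
    obtain ⟨hmnc4, _, _, hmncl, _, _⟩ := A.inter_alt2 hmn hzm hzn hz0 hz1
    have hxsub : ({A.bot, A.top, x, A.compl x} : Set K) ⊆ A.blk i ∩ A.blk m := by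
      intro w hw
      simp only [Set.mem_insert_iff, Set.mem_singleton_iff] at hw
      rcases hw with h | h | h | h <;> subst h
      · exact ⟨A.bot_mem i, A.bot_mem m⟩
      · exact ⟨A.top_mem i, A.top_mem m⟩
      · exact ⟨hxi, hxm⟩
      · exact hmcl x ⟨hxi, hxm⟩
    have hxcard : ({A.bot, A.top, x, A.compl x} : Set K).ncard = 4 :=
      ncard_four A.bot_ne_top' (Ne.symm hx0) (fun h => hx1 (A.compl_eq_bot h.symm))
        (Ne.symm hx1) (fun h => hx0 (A.compl_eq_top h.symm)) hx'
    have hysub : ({A.bot, A.top, y, A.compl y} : Set K) ⊆ A.blk i ∩ A.blk n := by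
      intro w hw
      simp only [Set.mem_insert_iff, Set.mem_singleton_iff] at hw
      rcases hw with h | h | h | h <;> subst h
      · exact ⟨A.bot_mem i, A.bot_mem n⟩
      · exact ⟨A.top_mem i, A.top_mem n⟩
      · exact ⟨hyi, hyn⟩
      · exact hncl y ⟨hyi, hyn⟩
    have hycard : ({A.bot, A.top, y, A.compl y} : Set K).ncard = 4 :=
      ncard_four A.bot_ne_top' (Ne.symm hy0) (fun h => hy1 (A.compl_eq_bot h.symm))
        (Ne.symm hy1) (fun h => hy0 (A.compl_eq_top h.symm)) hy'
    have hzsub : ({A.bot, A.top, z, A.compl z} : Set K) ⊆ A.blk m ∩ A.blk n := by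
      intro w hw
      simp only [Set.mem_insert_iff, Set.mem_singleton_iff] at hw
      rcases hw with h | h | h | h <;> subst h
      · exact ⟨A.bot_mem m, A.bot_mem n⟩
      · exact ⟨A.top_mem m, A.top_mem n⟩
      · exact ⟨hzm, hzn⟩
      · exact hmncl z ⟨hzm, hzn⟩
    have hzcard : ({A.bot, A.top, z, A.compl z} : Set K).ncard = 4 :=
      ncard_four A.bot_ne_top' (Ne.symm hz0) (fun h => hz1 (A.compl_eq_bot h.symm))
        (Ne.symm hz1) (fun h => hz0 (A.compl_eq_top h.symm)) hz'
    by_cases hT : A.blk i ∩ A.blk m ∩ A.blk n = {A.bot, A.top}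
    · refine hnl ⟨i, m, n, ?_, ?_, ?_, hT⟩
      · refine le_antisymm hmc4 ?_
        rw [← hxcard]
        exact Set.ncard_le_ncard hxsub ((A.finite i).inter_of_left _)
      · refine le_antisymm hmnc4 ?_
        rw [← hzcard]
        exact Set.ncard_le_ncard hzsub ((A.finite m).inter_of_left _)
      · rw [Set.inter_comm]
        refine le_antisymm hnc4 ?_
        rw [← hycard]
        exact Set.ncard_le_ncard hysub ((A.finite i).inter_of_left _)
    · obtain ⟨w, hw, hw0, hw1⟩ :
          ∃ w, w ∈ A.blk i ∩ A.blk m ∩ A.blk n ∧ w ≠ A.bot ∧ w ≠ A.top := by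
        by_contra hcon
        push_neg at hcon
        apply hT
        apply Set.Subset.antisymm
        · intro w hw
          by_cases h0 : w = A.bot
          · exact Or.inl h0
          · exact Or.inr (hcon w hw h0)
        · intro w hw
          simp only [Set.mem_insert_iff, Set.mem_singleton_iff] at hw
          rcases hw with h | h <;> subst h
          · exact ⟨⟨A.bot_mem i, A.bot_mem m⟩, A.bot_mem n⟩
          · exact ⟨⟨A.top_mem i, A.top_mem m⟩, A.top_mem n⟩
      have him_eq : ({A.bot, A.top, x, A.compl x} : Set K) = A.blk i ∩ A.blk m :=
        Set.eq_of_subset_of_ncard_le hxsub (by rw [hxcard]; exact hmc4)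
          ((A.finite i).inter_of_left _)
      have hmn_eq : ({A.bot, A.top, z, A.compl z} : Set K) = A.blk m ∩ A.blk n :=
        Set.eq_of_subset_of_ncard_le hzsub (by rw [hzcard]; exact hmnc4)
          ((A.finite m).inter_of_left _)
      obtain ⟨⟨hwi, hwm⟩, hwn⟩ := hw
      have hw_im : w ∈ ({A.bot, A.top, x, A.compl x} : Set K) := by
        rw [him_eq]; exact ⟨hwi, hwm⟩
      have hw_mn : w ∈ ({A.bot, A.top, z, A.compl z} : Set K) := by
        rw [hmn_eq]; exact ⟨hwm, hwn⟩
      simp only [Set.mem_insert_iff, Set.mem_singleton_iff] at hw_im hw_mn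
      have hwz : w = z ∨ w = A.compl z := by
        rcases hw_mn with h | h | h | h
        · exact absurd h hw0
        · exact absurd h hw1
        · exact Or.inl h
        · exact Or.inr h
      rcases hwz with h | h
      · exact hzi (h ▸ hwi)
      · have hzw : z = A.compl w := by rw [h, A.compl_invol]
        have : A.compl w ∈ A.blk i := A.compl_mem i w hwi
        exact hzi (by rw [hzw]; exact this)

end PastedFamily

/-- An atomic amalgam of Kleene lattices is a sharply paraorthomodular poset
(paraorthomodular and orthogonal) iff it contains no atomic loop of order 3. -/
theorem stmt_13 {K ι : Type*} (A : PastedFamily K ι) :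
    (A.ParaOM ∧ ∀ x y : K, A.gle x (A.compl y) → ∃ s, A.IsLubA x y s) ↔
      ¬ ∃ i j k : ι, A.AtomicLoop3 i j k := by
  constructor
  · rintro ⟨_, hOrth⟩
    exact A.noloop_of_ortho hOrth
  · intro h
    exact ⟨A.paraOM_always, A.ortho_of_noloop h⟩
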